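/- For the weight sequence γ_j = exp(-j^{2p}) with p > 0, the minimal rate R_n^* = min_m max(γ_m, m/n) satisfies R_n^* ≍ n^{-1} (log n)^{1/(2p)}, i.e., there exist constants 0 < c ≤ C and N such that for all n ≥ N, c n^{-1}(log n)^{1/(2p)} ≤ R_n^* ≤ C n^{-1}(log n)^{1/(2p)}. -/
import Mathlib

open Filter Real

/-- Exponential weights `γ_j = exp(-j^{2p})`, `p > 0`: the minimal rate
`R_n^* = min_m max(γ_m, m/n)` is of order `n⁻¹ (log n)^{1/(2p)}`. -/
theorem stmt4 (p : ℝ) (hp : 0 < p) :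
    ∃ c C : ℝ, ∃ N : ℕ, 0 < c ∧ c ≤ C ∧ ∀ n : ℕ, N ≤ n →
      c * ((n : ℝ)⁻¹ * Real.log n ^ (1 / (2 * p))) ≤
        (⨅ m : ℕ, max (Real.exp (-(((m : ℝ) + 1) ^ (2 * p)))) (((m : ℝ) + 1) / n)) ∧
      (⨅ m : ℕ, max (Real.exp (-(((m : ℝ) + 1) ^ (2 * p)))) (((m : ℝ) + 1) / n)) ≤
        C * ((n : ℝ)⁻¹ * Real.log n ^ (1 / (2 * p))) := by
  have h2p : (0:ℝ) < 2 * p := by linarith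
  set q : ℝ := 1 / (2 * p) with hqdef
  have hqpos : 0 < q := by positivity
  have hne : (2*p) ≠ 0 := ne_of_gt h2p
  have hqmul : 2 * p * q = 1 := by rw [hqdef]; exact mul_one_div_cancel hne
  have hpq : p * q = 1 / 2 := by
    rw [hqdef, mul_one_div, div_eq_div_iff hne two_ne_zero]; ring
  set c : ℝ := (1/2 : ℝ) ^ q with hcdef
  have hcpos : 0 < c := Real.rpow_pos_of_pos (by norm_num) _
  have hc1 : c ≤ 1 := Real.rpow_le_one (by norm_num) (by norm_num) hqpos.le
  -- eventual conditions
  have hlogt : Tendsto (fun n : ℕ => Real.log n) atTop atTop :=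
    Real.tendsto_log_atTop.comp tendsto_natCast_atTop_atTop
  have h1 : ∀ᶠ n : ℕ in atTop, max ((2:ℝ) ^ (2*p)) 1 ≤ Real.log n :=
    hlogt.eventually_ge_atTop _
  have h2R : ∀ᶠ x : ℝ in atTop, Real.log x ≤ x ^ p := by
    filter_upwards [(isLittleO_log_rpow_atTop hp).def one_pos,
      eventually_ge_atTop (1:ℝ)] with x hx hx1
    have := hx
    rw [Real.norm_eq_abs, Real.norm_eq_abs, one_mul] at this
    calc Real.log x ≤ |Real.log x| := le_abs_self _
      _ ≤ |x ^ p| := this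
      _ = x ^ p := abs_of_nonneg (Real.rpow_nonneg (by linarith) _)
  have h2 : ∀ᶠ n : ℕ in atTop, Real.log n ≤ (n:ℝ) ^ p :=
    tendsto_natCast_atTop_atTop.eventually h2R
  have h3 : ∀ᶠ n : ℕ in atTop, (1:ℝ) ≤ (n:ℝ) :=
    tendsto_natCast_atTop_atTop.eventually_ge_atTop 1
  obtain ⟨N, hN⟩ := eventually_atTop.mp (h1.and (h2.and h3))
  refine ⟨c, 2, N, hcpos, by linarith, fun n hn => ?_⟩
  obtain ⟨hLmax, hLp, hn1⟩ := hN n hn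
  set L : ℝ := Real.log n with hLdef
  have hL1 : (1:ℝ) ≤ L := le_trans (le_max_right _ _) hLmax
  have hL2 : (2:ℝ) ^ (2*p) ≤ L := le_trans (le_max_left _ _) hLmax
  have hL0 : (0:ℝ) ≤ L := by linarith
  have npos : (0:ℝ) < (n:ℝ) := by linarith
  -- `L ^ q ≥ 2`
  have hLq2 : (2:ℝ) ≤ L ^ q := by
    have h8 : ((2:ℝ) ^ (2*p)) ^ q = 2 := by
      rw [← Real.rpow_mul (by norm_num : (0:ℝ) ≤ 2), hqmul, Real.rpow_one]
    calc (2:ℝ) = ((2:ℝ) ^ (2*p)) ^ q := h8.symm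
      _ ≤ L ^ q := Real.rpow_le_rpow (by positivity) hL2 hqpos.le
  have hLq1 : (1:ℝ) ≤ L ^ q := by linarith
  -- `L ^ q ≤ n ^ (1/2)`
  have hsq : L ^ q ≤ (n:ℝ) ^ (1/2 : ℝ) := by
    calc L ^ q ≤ ((n:ℝ) ^ p) ^ q := Real.rpow_le_rpow hL0 hLp hqpos.le
      _ = (n:ℝ) ^ (1/2 : ℝ) := by rw [← Real.rpow_mul npos.le, hpq]
  have hBdd : BddBelow (Set.range fun m : ℕ =>
      max (Real.exp (-(((m : ℝ) + 1) ^ (2 * p)))) (((m : ℝ) + 1) / n)) := by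
    refine ⟨0, fun x hx => ?_⟩
    obtain ⟨m, rfl⟩ := hx
    exact le_trans (Real.exp_pos _).le (le_max_left _ _)
  constructor
  · -- lower bound
    refine le_ciInf fun m => ?_
    set a : ℝ := (m:ℝ) + 1 with hadef
    have ha1 : (1:ℝ) ≤ a := by
      have := Nat.cast_nonneg (α := ℝ) m; simp only [hadef]; linarith
    have ha0 : (0:ℝ) ≤ a := by linarith
    rcases le_or_gt (a ^ (2*p)) ((1/2) * L) with hle | hlt
    · refine le_trans ?_ (le_max_left _ _)
      have he : Real.exp (-(1/2 * L)) ≤ Real.exp (-(a ^ (2*p))) :=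
        Real.exp_le_exp.2 (by linarith)
      have he2 : Real.exp (-(1/2 * L)) = (n:ℝ) ^ (-(1/2) : ℝ) := by
        rw [Real.rpow_def_of_pos npos, ← hLdef]
        congr 1
        ring
      have key : c * ((n:ℝ)⁻¹ * L ^ q) ≤ (n:ℝ) ^ (-(1/2) : ℝ) := by
        have h4 : (n:ℝ)⁻¹ * L ^ q ≤ (n:ℝ)⁻¹ * (n:ℝ) ^ (1/2 : ℝ) := by
          apply mul_le_mul_of_nonneg_left hsq (by positivity)
        have h5 : (n:ℝ)⁻¹ * (n:ℝ) ^ (1/2 : ℝ) = (n:ℝ) ^ (-(1/2) : ℝ) := by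
          rw [← Real.rpow_neg_one, ← Real.rpow_add npos]; norm_num
        have h6 : c * ((n:ℝ)⁻¹ * L ^ q) ≤ (n:ℝ)⁻¹ * L ^ q := by
          have : (0:ℝ) ≤ (n:ℝ)⁻¹ * L ^ q := by positivity
          nlinarith
        linarith
      calc c * ((n:ℝ)⁻¹ * L ^ q) ≤ (n:ℝ) ^ (-(1/2) : ℝ) := key
        _ = Real.exp (-(1/2 * L)) := he2.symm
        _ ≤ _ := he
    · refine le_trans ?_ (le_max_right _ _)
      have hge : (1/2 : ℝ) * L ≤ a ^ (2*p) := hlt.le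
      have ha' : c * L ^ q ≤ a := by
        calc c * L ^ q = ((1/2 : ℝ) * L) ^ q := by
              rw [Real.mul_rpow (by norm_num) hL0, hcdef]
          _ ≤ (a ^ (2*p)) ^ q := Real.rpow_le_rpow (by positivity) hge hqpos.le
          _ = a := by
              rw [← Real.rpow_mul ha0, hqmul, Real.rpow_one]
      rw [div_eq_mul_inv, mul_comm ((n:ℝ)⁻¹) (L ^ q), ← mul_assoc]
      exact mul_le_mul_of_nonneg_right ha' (by positivity)
  · -- upper bound
    set m : ℕ := ⌈L ^ q⌉₊ with hmdef
    refine le_trans (ciInf_le hBdd m) ?_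
    set a : ℝ := (m:ℝ) + 1 with hadef
    have haLq : L ^ q ≤ a := by
      have := Nat.le_ceil (L ^ q)
      simp only [hadef, hmdef]; linarith
    have haub : a ≤ 2 * L ^ q := by
      have h7 : ((m:ℕ) : ℝ) < L ^ q + 1 := Nat.ceil_lt_add_one (by positivity)
      simp only [hadef]; linarith
    have ha0 : (0:ℝ) ≤ a := le_trans (by positivity) haLq
    apply max_le
    · -- exp part
      have hLa : L ≤ a ^ (2*p) := by
        calc L = (L ^ q) ^ (2*p) := by
              rw [← Real.rpow_mul hL0, show q * (2*p) = 1 from by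
                rw [mul_comm]; exact hqmul, Real.rpow_one]
          _ ≤ a ^ (2*p) := Real.rpow_le_rpow (by positivity) haLq h2p.le
      have : Real.exp (-(a ^ (2*p))) ≤ Real.exp (-L) :=
        Real.exp_le_exp.2 (by linarith)
      have hexpL : Real.exp (-L) = (n:ℝ)⁻¹ := by
        rw [Real.exp_neg, hLdef, Real.exp_log npos]
      calc Real.exp (-(a ^ (2*p))) ≤ (n:ℝ)⁻¹ := by rw [← hexpL]; exact this
        _ = (n:ℝ)⁻¹ * 1 := (mul_one _).symm
        _ ≤ (n:ℝ)⁻¹ * L ^ q := by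
            apply mul_le_mul_of_nonneg_left hLq1 (by positivity)
        _ ≤ 2 * ((n:ℝ)⁻¹ * L ^ q) := by nlinarith [hLq1, (by positivity : (0:ℝ) < (n:ℝ)⁻¹)]
    · -- linear part
      rw [div_eq_mul_inv]
      calc a * (n:ℝ)⁻¹ ≤ 2 * L ^ q * (n:ℝ)⁻¹ :=
            mul_le_mul_of_nonneg_right haub (by positivity)
        _ = 2 * ((n:ℝ)⁻¹ * L ^ q) := by ring
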